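/- Let N ≥ 3 be an integer, Δx, Δt > 0 and ω ∈ ℝ. Let u, U : ℤ/Nℤ → ℝ be grid functions on the periodic lattice, set ū = (u + U)/2 and w = (U − u)/Δt, and suppose that for every n ∈ ℤ/Nℤ the scheme equation δ̃_x² w(n) + (δ̃_x² ū(n)) (δ_x ū(n)) + δ_x ( ū · δ̃_x² ū )(n) − 2ω δ_x ū(n) = 0 holds, where (ū · δ̃_x² ū)(m) := ū(m) δ̃_x² ū(m). Then Σ_{n ∈ ℤ/Nℤ} Δx (δ_x^+ U(n))² / 2 = Σ_{n ∈ ℤ/Nℤ} Δx (δ_x^+ u(n))² / 2. -/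

import Mathlib

/-- Forward difference on the periodic lattice. -/
noncomputable def dxp {N : ℕ} (Δx : ℝ) (f : ZMod N → ℝ) (n : ZMod N) : ℝ :=
  (f (n + 1) - f n) / Δx

/-- Backward difference on the periodic lattice. -/
noncomputable def dxm {N : ℕ} (Δx : ℝ) (f : ZMod N → ℝ) (n : ZMod N) : ℝ :=
  (f n - f (n - 1)) / Δx

/-- Centered difference `δ_x = (δ_x^+ + δ_x^-)/2` on the periodic lattice. -/
noncomputable def dxc {N : ℕ} (Δx : ℝ) (f : ZMod N → ℝ) (n : ZMod N) : ℝ :=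
  (dxp Δx f n + dxm Δx f n) / 2

/-- Second central difference `δ̃_x²` on the periodic lattice. -/
noncomputable def d2x {N : ℕ} (Δx : ℝ) (f : ZMod N → ℝ) (n : ZMod N) : ℝ :=
  (f (n + 1) - 2 * f n + f (n - 1)) / Δx ^ 2

section aux

variable {N : ℕ} [NeZero N]

lemma shift_sum (f : ZMod N → ℝ) : ∑ n : ZMod N, f (n + 1) = ∑ n : ZMod N, f n :=
  Fintype.sum_equiv (Equiv.addRight (1 : ZMod N)) _ _ (fun _ => rfl)

lemma telescope_sum (G : ZMod N → ℝ) (E : ZMod N → ℝ)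
    (h : ∀ n, E n = G (n + 1) - G n) : ∑ n : ZMod N, E n = 0 := by
  calc ∑ n : ZMod N, E n = ∑ n : ZMod N, (G (n + 1) - G n) :=
        Finset.sum_congr rfl (fun n _ => h n)
    _ = (∑ n : ZMod N, G (n + 1)) - ∑ n : ZMod N, G n := Finset.sum_sub_distrib _ _
    _ = 0 := by rw [shift_sum]; ring

lemma L2 (Δx : ℝ) (a b : ZMod N → ℝ) :
    (∑ n : ZMod N, a n * dxc Δx b n) = -∑ n : ZMod N, b n * dxc Δx a n := by
  have key : ∑ n : ZMod N, (a n * dxc Δx b n + b n * dxc Δx a n) = 0 := by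
    apply telescope_sum (fun m => (a m * b (m - 1) + b m * a (m - 1)) * (Δx⁻¹ / 2))
    intro n
    simp only [dxc, dxp, dxm, add_sub_cancel_right]
    ring
  rw [Finset.sum_add_distrib] at key
  linarith

lemma L1 (Δx : ℝ) (a b : ZMod N → ℝ) :
    (∑ n : ZMod N, dxp Δx a n * dxp Δx b n) = -∑ n : ZMod N, a n * d2x Δx b n := by
  have key : ∑ n : ZMod N, (dxp Δx a n * dxp Δx b n + a n * d2x Δx b n) = 0 := by
    apply telescope_sum (fun m => (a m * b m - a m * b (m - 1)) * (Δx ^ 2)⁻¹)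
    intro n
    simp only [dxp, d2x, add_sub_cancel_right]
    ring
  rw [Finset.sum_add_distrib] at key
  linarith

end aux

/-- The fully discrete `H₁`-preserving scheme for the periodic modified Hunter–Saxton
equation conserves the discrete Hamiltonian `Σ_n Δx (δ_x^+ f(n))²/2` from one time
level (`u`) to the next (`U`). -/
theorem stmt_18 (N : ℕ) [NeZero N] (hN : 3 ≤ N) (Δx Δt ω : ℝ)
    (hΔx : 0 < Δx) (hΔt : 0 < Δt)
    (u U : ZMod N → ℝ)
    (hscheme : ∀ n : ZMod N,
      d2x Δx (fun m => (U m - u m) / Δt) n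
        + (d2x Δx (fun m => (u m + U m) / 2) n)
            * dxc Δx (fun m => (u m + U m) / 2) n
        + dxc Δx
            (fun m => ((u m + U m) / 2) * d2x Δx (fun k => (u k + U k) / 2) m) n
        - 2 * ω * dxc Δx (fun m => (u m + U m) / 2) n = 0) :
    (∑ n : ZMod N, Δx * (dxp Δx U n) ^ 2 / 2)
      = ∑ n : ZMod N, Δx * (dxp Δx u n) ^ 2 / 2 := by
  have hΔt0 : (Δt : ℝ) ≠ 0 := hΔt.ne'
  set v : ZMod N → ℝ := fun m => (u m + U m) / 2 with hv
  set w : ZMod N → ℝ := fun m => (U m - u m) / Δt with hw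
  have hv' : ∀ m, (u m + U m) / 2 = v m := fun m => rfl
  simp only [hv'] at hscheme
  -- T4
  have T4 : ∑ n : ZMod N, v n * dxc Δx v n = 0 := by
    have := L2 Δx v v
    linarith
  have T3 : ∑ n : ZMod N, v n * dxc Δx (fun m => v m * d2x Δx v m) n
      = -∑ n : ZMod N, v n * d2x Δx v n * dxc Δx v n := by
    rw [L2]
  have hd2w : ∑ n : ZMod N, v n * d2x Δx w n = 0 := by
    have hcongr : ∀ n : ZMod N, v n * d2x Δx w n
        = 2 * ω * (v n * dxc Δx v n)
          - v n * d2x Δx v n * dxc Δx v n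
          - v n * dxc Δx (fun m => v m * d2x Δx v m) n := by
      intro n
      have h := hscheme n
      have h2 : d2x Δx w n = 2 * ω * dxc Δx v n - d2x Δx v n * dxc Δx v n
          - dxc Δx (fun m => v m * d2x Δx v m) n := by linarith
      rw [h2]; ring
    calc ∑ n : ZMod N, v n * d2x Δx w n
        = ∑ n : ZMod N, (2 * ω * (v n * dxc Δx v n)
            - v n * d2x Δx v n * dxc Δx v n
            - v n * dxc Δx (fun m => v m * d2x Δx v m) n) :=
          Finset.sum_congr rfl (fun n _ => hcongr n)
      _ = 2 * ω * (∑ n : ZMod N, v n * dxc Δx v n)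
            - (∑ n : ZMod N, v n * d2x Δx v n * dxc Δx v n)
            - ∑ n : ZMod N, v n * dxc Δx (fun m => v m * d2x Δx v m) n := by
          rw [Finset.sum_sub_distrib, Finset.sum_sub_distrib, ← Finset.mul_sum]
      _ = 0 := by rw [T4, T3]; ring
  have key : ∑ n : ZMod N, dxp Δx v n * dxp Δx w n = 0 := by
    rw [L1, hd2w, neg_zero]
  calc ∑ n : ZMod N, Δx * (dxp Δx U n) ^ 2 / 2
      = ∑ n : ZMod N, (Δx * (dxp Δx u n) ^ 2 / 2
          + (Δx * Δt) * (dxp Δx v n * dxp Δx w n)) := by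
        refine Finset.sum_congr rfl (fun n _ => ?_)
        show Δx * (dxp Δx U n) ^ 2 / 2
            = Δx * (dxp Δx u n) ^ 2 / 2 + (Δx * Δt) * (dxp Δx v n * dxp Δx w n)
        simp only [dxp, hv, hw]
        field_simp
        ring
    _ = ∑ n : ZMod N, Δx * (dxp Δx u n) ^ 2 / 2 := by
        rw [Finset.sum_add_distrib, ← Finset.mul_sum, key]; ring
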